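/- Let F ≥ 2, let S be a numerical semigroup with concentration 2 and Frobenius number F which is not irreducible, and define α(S) = max{x ∈ ℕ \ S | F - x ∉ S, 2x ≠ F}. Define S_0 = S and S_{n+1} = S_n ∪ {α(S_n)} if S_n is not irreducible, S_{n+1} = S_n otherwise. Then there exists k ∈ ℕ such that S_k is an irreducible numerical semigroup (with concentration 2 and Frobenius number F). -/
import Mathlib


open Set

/-- A numerical semigroup: contains 0, closed under addition, finite complement. -/
def IsNumSgp (S : Set ℕ) : Prop :=
  0 ∈ S ∧ (∀ a ∈ S, ∀ b ∈ S, a + b ∈ S) ∧ (Sᶜ : Set ℕ).Finite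

/-- The multiplicity: least positive element. -/
noncomputable def mult (S : Set ℕ) : ℕ := sInf {n | n ∈ S ∧ n ≠ 0}

/-- next_S(s) = min { x ∈ S | s < x }. -/
noncomputable def nextS (S : Set ℕ) (s : ℕ) : ℕ := sInf {x | x ∈ S ∧ s < x}

/-- The concentration C(S) = max { next_S(s) - s | s ∈ S \ {0} }. -/
noncomputable def conc (S : Set ℕ) : ℕ :=
  sSup {d | ∃ s ∈ S, s ≠ 0 ∧ d = nextS S s - s}

/-- The Frobenius number: largest gap. -/
noncomputable def frob (S : Set ℕ) : ℕ := sSup (Sᶜ : Set ℕ)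

/-- The genus: number of gaps. -/
noncomputable def genus (S : Set ℕ) : ℕ := (Sᶜ : Set ℕ).ncard

/-- x is a minimal generator of S. -/
def IsMinGen (S : Set ℕ) (x : ℕ) : Prop :=
  x ∈ S ∧ x ≠ 0 ∧ ¬∃ a ∈ S, ∃ b ∈ S, a ≠ 0 ∧ b ≠ 0 ∧ a + b = x

/-- The embedding dimension: number of minimal generators. -/
noncomputable def edim (S : Set ℕ) : ℕ := {x | IsMinGen S x}.ncard

/-- n(S): the number of elements of S smaller than the Frobenius number. -/
noncomputable def nS (S : Set ℕ) : ℕ := {s | s ∈ S ∧ s < frob S}.ncard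

/-- The half-line Δ(m) = {0} ∪ {m, m+1, ...}. -/
def Delta (m : ℕ) : Set ℕ := {0} ∪ {n | m ≤ n}

def IsHalfLine (S : Set ℕ) : Prop := ∃ m, S = Delta m

/-- An irreducible numerical semigroup. -/
def Irred (S : Set ℕ) : Prop :=
  ¬∃ T₁ T₂ : Set ℕ, IsNumSgp T₁ ∧ IsNumSgp T₂ ∧ S ⊂ T₁ ∧ S ⊂ T₂ ∧ S = T₁ ∩ T₂

section helpers

variable {T : Set ℕ} {F : ℕ}

lemma gap_le (hT : IsNumSgp T) {x : ℕ} (hx : x ∉ T) : x ≤ frob T :=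
  le_csSup hT.2.2.bddAbove hx

lemma mem_of_gt_frob (hT : IsNumSgp T) {x : ℕ} (hx : frob T < x) : x ∈ T := by
  by_contra h; exact absurd (gap_le hT h) (not_le.mpr hx)

lemma frob_notmem (hT : IsNumSgp T) (h : frob T ≠ 0) : frob T ∉ T := by
  have hne : (Tᶜ : Set ℕ).Nonempty := by
    by_contra hc
    rw [Set.not_nonempty_iff_eq_empty] at hc
    exact h (by simp [frob, hc])
  exact Nat.sSup_mem hne hT.2.2.bddAbove

lemma nextS_spec (hT : IsNumSgp T) (s : ℕ) :
    nextS T s ∈ T ∧ s < nextS T s := by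
  have hne : {x | x ∈ T ∧ s < x}.Nonempty :=
    ⟨frob T + s + 1, mem_of_gt_frob hT (by omega), by omega⟩
  exact Nat.sInf_mem hne

lemma diff_bdd (hT : IsNumSgp T) :
    BddAbove {d | ∃ s ∈ T, s ≠ 0 ∧ d = nextS T s - s} := by
  refine ⟨frob T + 1, ?_⟩
  rintro d ⟨s, hs, h0, rfl⟩
  have : nextS T s ≤ frob T + s + 1 :=
    Nat.sInf_le ⟨mem_of_gt_frob hT (by omega), by omega⟩
  omega

lemma step2 (hT : IsNumSgp T) (hC : conc T = 2) {s : ℕ} (hs : s ∈ T) (h0 : s ≠ 0) :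
    s + 1 ∈ T ∨ s + 2 ∈ T := by
  obtain ⟨hmem, hlt⟩ := nextS_spec hT s
  have hd : nextS T s - s ≤ 2 := by
    have := le_csSup (diff_bdd hT) (⟨s, hs, h0, rfl⟩ :
      nextS T s - s ∈ {d | ∃ s ∈ T, s ≠ 0 ∧ d = nextS T s - s})
    rwa [show sSup {d | ∃ s ∈ T, s ≠ 0 ∧ d = nextS T s - s} = 2 from hC] at this
  interval_cases h : nextS T s - s
  · omega
  · left; have : nextS T s = s + 1 := by omega
    rwa [this] at hmem
  · right; have : nextS T s = s + 2 := by omega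
    rwa [this] at hmem

lemma mult_spec (hT : IsNumSgp T) : mult T ∈ T ∧ mult T ≠ 0 :=
  Nat.sInf_mem (⟨frob T + 1, mem_of_gt_frob hT (by omega), by omega⟩ :
    {n | n ∈ T ∧ n ≠ 0}.Nonempty)

lemma gap_pred (hT : IsNumSgp T) (hC : conc T = 2) {g : ℕ} (hg : g ∉ T)
    (hm : mult T < g) : g - 1 ∈ T := by
  obtain ⟨hmT, hm0⟩ := mult_spec hT
  set s := sSup (T ∩ Set.Iio g) with hsdef
  have hbdd : BddAbove (T ∩ Set.Iio g) := ⟨g, fun x hx => le_of_lt hx.2⟩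
  have hsm : s ∈ T ∩ Set.Iio g := Nat.sSup_mem ⟨mult T, hmT, hm⟩ hbdd
  have hle : ∀ t ∈ T ∩ Set.Iio g, t ≤ s := fun t ht => le_csSup hbdd ht
  have hms : mult T ≤ s := hle _ ⟨hmT, hm⟩
  have h0 : s ≠ 0 := by intro h; omega
  rcases step2 hT hC hsm.1 h0 with h1 | h1
  · rcases lt_trichotomy (s + 1) g with hc | hc | hc
    · have := hle _ ⟨h1, hc⟩; omega
    · exact absurd (hc ▸ h1) hg
    · have := hsm.2; simp only [Set.mem_Iio] at this; omega
  · rcases lt_trichotomy (s + 2) g with hc | hc | hc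
    · have := hle _ ⟨h1, hc⟩; omega
    · exact absurd (hc ▸ h1) hg
    · have hsg : s < g := hsm.2
      have hseq : s = g - 1 := by omega
      exact hseq ▸ hsm.1

lemma irred_of_empty (hT : IsNumSgp T) (hfr : frob T = F) (hF : 2 ≤ F)
    (hA : {x : ℕ | x ∉ T ∧ F - x ∉ T ∧ 2 * x ≠ F} = ∅) : Irred T := by
  have hFnot : F ∉ T := hfr ▸ frob_notmem hT (by omega)
  have key : ∀ T₁ : Set ℕ, IsNumSgp T₁ → T ⊆ T₁ → F ∉ T₁ → T₁ ⊆ T := by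
    intro T₁ h1 hsub hF1 x hx
    by_contra hxT
    rcases Classical.em (F - x ∈ T) with hc | hc
    · have hxF : x ≤ F := hfr ▸ gap_le hT hxT
      have : x + (F - x) ∈ T₁ := h1.2.1 x hx _ (hsub hc)
      rw [show x + (F - x) = F by omega] at this
      exact hF1 this
    · have h2x : 2 * x = F := by
        by_contra h2
        exact absurd hA (Set.nonempty_iff_ne_empty.mp ⟨x, hxT, hc, h2⟩)
      have : x + x ∈ T₁ := h1.2.1 x hx x hx
      rw [show x + x = F by omega] at this
      exact hF1 this
  rintro ⟨T₁, T₂, h1, h2, hs1, hs2, heq⟩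
  have : F ∉ T₁ ∨ F ∉ T₂ := by
    by_contra h; push_neg at h
    exact hFnot (heq ▸ Set.mem_inter h.1 h.2)
  rcases this with h | h
  · exact hs1.2 (key T₁ h1 hs1.1 h)
  · exact hs2.2 (key T₂ h2 hs2.1 h)

end helpers

section mainstep

variable {T : Set ℕ} {F : ℕ}

lemma main_step (hT : IsNumSgp T) (hfr : frob T = F) (hF : 2 ≤ F) (hC : conc T = 2)
    (hA : {x : ℕ | x ∉ T ∧ F - x ∉ T ∧ 2 * x ≠ F}.Nonempty) :
    sSup {x : ℕ | x ∉ T ∧ F - x ∉ T ∧ 2 * x ≠ F} ∉ T ∧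
    IsNumSgp (T ∪ {sSup {x : ℕ | x ∉ T ∧ F - x ∉ T ∧ 2 * x ≠ F}}) ∧
    frob (T ∪ {sSup {x : ℕ | x ∉ T ∧ F - x ∉ T ∧ 2 * x ≠ F}}) = F ∧
    conc (T ∪ {sSup {x : ℕ | x ∉ T ∧ F - x ∉ T ∧ 2 * x ≠ F}}) = 2 := by
  set A : Set ℕ := {x : ℕ | x ∉ T ∧ F - x ∉ T ∧ 2 * x ≠ F} with hAdef
  have hbddA : BddAbove A := ⟨F, fun x hx => hfr ▸ gap_le hT hx.1⟩
  set a := sSup A with hadef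
  have haA : a ∈ A := Nat.sSup_mem hA hbddA
  obtain ⟨haT, haF, ha2⟩ := haA
  have haub : ∀ x ∈ A, x ≤ a := fun x hx => le_csSup hbddA hx
  have haleF : a ≤ F := hfr ▸ gap_le hT haT
  have hane : a ≠ F := by intro h; rw [h] at haF; exact haF (by simpa using hT.1)
  have ha0 : a ≠ 0 := by intro h; rw [h] at haT; exact haT hT.1
  have h2a : F < 2 * a := by
    rcases lt_trichotomy (2 * a) F with h | h | h
    · have : F - a ∈ A := ⟨haF, by rw [show F - (F - a) = a by omega]; exact haT, by omega⟩
      have := haub _ this; omega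
    · exact absurd h ha2
    · exact h
  have hFT : F ∉ T := hfr ▸ frob_notmem hT (by omega)
  -- key closure fact
  have key : ∀ t ∈ T, t ≠ 0 → a + t ∈ T := by
    intro t ht ht0
    rcases le_or_gt (a + t) F with hle | hlt
    · by_contra hnot
      have hnA : a + t ∉ A := fun h => by have := haub _ h; omega
      rw [hAdef, Set.mem_setOf_eq] at hnA
      push_neg at hnA
      rcases Classical.em (F - (a + t) ∈ T) with hc | hc
      · have : (F - (a + t)) + t ∈ T := hT.2.1 _ hc _ ht
        rw [show F - (a + t) + t = F - a by omega] at this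
        exact haF this
      · have := hnA hnot hc; omega
    · exact mem_of_gt_frob hT (by omega)
  -- T' is a numerical semigroup
  have hsub : T ⊆ T ∪ {a} := Set.subset_union_left
  have hmemT' : ∀ x ∈ T, x ∈ T ∪ {a} := fun x hx => hsub hx
  have haT' : a ∈ T ∪ {a} := Set.mem_union_right _ rfl
  have hnum : IsNumSgp (T ∪ {a}) := by
    refine ⟨hsub hT.1, ?_, ?_⟩
    · rintro x (hx | hx) y (hy | hy)
      · exact hsub (hT.2.1 x hx y hy)
      · simp only [Set.mem_singleton_iff] at hy; subst hy
        rcases Classical.em (x = 0) with h0 | h0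
        · subst h0; simpa using haT'
        · exact hsub (by rw [add_comm]; exact key x hx h0)
      · simp only [Set.mem_singleton_iff] at hx; subst hx
        rcases Classical.em (y = 0) with h0 | h0
        · subst h0; simpa using haT'
        · exact hsub (key y hy h0)
      · simp only [Set.mem_singleton_iff] at hx hy; subst hx; subst hy
        exact hsub (mem_of_gt_frob hT (by omega))
    · apply hT.2.2.subset
      intro x hx
      rw [Set.compl_union] at hx
      exact hx.1
  -- complement and frobenius
  have hFT' : F ∉ T ∪ {a} := by
    rintro (h | h)
    · exact hFT h
    · simp only [Set.mem_singleton_iff] at h; exact hane h.symm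
  have hfrob' : frob (T ∪ {a}) = F := by
    apply le_antisymm
    · apply csSup_le ⟨F, hFT'⟩
      intro x hx
      have : x ∉ T := fun h => hx (hsub h)
      exact hfr ▸ gap_le hT this
    · exact le_csSup hnum.2.2.bddAbove hFT'
  -- a + 1 ∈ T or a = F - 1
  have hsucc : a + 1 ∈ T ∨ a = F - 1 := by
    rcases Classical.em (a = F - 1) with h | h
    · right; exact h
    · left
      by_contra hnot
      have haF2 : a ≤ F - 2 := by omega
      have hnA : a + 1 ∉ A := fun hh => by have := haub _ hh; omega
      rw [hAdef, Set.mem_setOf_eq] at hnA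
      push_neg at hnA
      have hy : F - (a + 1) ∈ T := by
        rcases Classical.em (F - (a + 1) ∈ T) with hc | hc
        · exact hc
        · have := hnA hnot hc; omega
      have hy0 : F - (a + 1) ≠ 0 := by omega
      have hya : F - (a + 1) < a := by omega
      have hma : mult T < a + 1 := by
        have h := Nat.sInf_le (show F - (a+1) ∈ {n | n ∈ T ∧ n ≠ 0} from ⟨hy, hy0⟩)
        have h2 : mult T ≤ F - (a + 1) := h
        omega
      exact haT (by simpa using gap_pred hT hC hnot hma)
  -- F - 1 ∈ T ∪ {a}
  have hFm1 : F - 1 ∈ T ∪ {a} := by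
    rcases Classical.em (F - 1 ∈ T) with h | h
    · exact hsub h
    · rcases Classical.em (F - 1 ∈ A) with h2 | h2
      · have h3 := haub _ h2
        have : a = F - 1 := by omega
        rw [← this]; exact haT'
      · rw [hAdef, Set.mem_setOf_eq] at h2
        push_neg at h2
        rcases Classical.em (F - (F - 1) ∈ T) with hc | hc
        · rw [show F - (F - 1) = 1 by omega] at hc
          exfalso
          have hall : ∀ n : ℕ, n ∈ T := by
            intro n; induction n with
            | zero => exact hT.1
            | succ m ih => exact hT.2.1 m ih 1 hc
          exact hFT (hall F)
        · have hF2 : 2 * (F - 1) = F := h2 h hc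
          have hFeq : F = 2 := by omega
          have : a = 1 := by omega
          exfalso; rw [this] at ha2; omega
  -- conc (T ∪ {a}) = 2
  have hconc : conc (T ∪ {a}) = 2 := by
    have hbound : ∀ d ∈ {d | ∃ s ∈ T ∪ {a}, s ≠ 0 ∧ d = nextS (T ∪ {a}) s - s}, d ≤ 2 := by
      rintro d ⟨s, hs, h0, rfl⟩
      have hnext : s + 1 ∈ T ∪ {a} ∨ s + 2 ∈ T ∪ {a} := by
        rcases hs with hs | hs
        · rcases step2 hT hC hs h0 with h | h
          · exact Or.inl (hsub h)
          · exact Or.inr (hsub h)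
        · simp only [Set.mem_singleton_iff] at hs; subst hs
          rcases hsucc with h | h
          · exact Or.inl (hsub h)
          · right
            have hFp1 : F + 1 ∈ T := mem_of_gt_frob hT (by omega)
            have heq : a + 2 = F + 1 := by omega
            rw [heq]; exact hsub hFp1
      have : nextS (T ∪ {a}) s ≤ s + 2 := by
        rcases hnext with h | h
        · exact le_trans (Nat.sInf_le ⟨h, by omega⟩) (by omega)
        · exact Nat.sInf_le ⟨h, by omega⟩
      omega
    have h2mem : (2 : ℕ) ∈ {d | ∃ s ∈ T ∪ {a}, s ≠ 0 ∧ d = nextS (T ∪ {a}) s - s} := by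
      have hval : nextS (T ∪ {a}) (F - 1) = F + 1 := by
        apply le_antisymm
        · exact Nat.sInf_le (show F + 1 ∈ {x | x ∈ T ∪ {a} ∧ F - 1 < x} from
            ⟨hsub (mem_of_gt_frob hT (by omega)), by omega⟩)
        · apply le_csInf (⟨F + 1, hsub (mem_of_gt_frob hT (by omega)), by omega⟩ :
            {x | x ∈ T ∪ {a} ∧ F - 1 < x}.Nonempty)
          rintro x ⟨hx, hlt⟩
          rcases Classical.em (x = F) with h | h
          · exact absurd (h ▸ hx) hFT'
          · omega
      exact ⟨F - 1, hFm1, by omega, by rw [hval]; omega⟩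
    exact le_antisymm (csSup_le ⟨2, h2mem⟩ hbound) (le_csSup ⟨2, hbound⟩ h2mem)
  exact ⟨haT, hnum, hfrob', hconc⟩

end mainstep

theorem stmt19 (F : ℕ) (hF : 2 ≤ F) (S : Set ℕ) (hS : IsNumSgp S)
    (hC : conc S = 2) (hFS : frob S = F) (hirr : ¬Irred S)
    (alpha : Set ℕ → ℕ)
    (halpha : ∀ T : Set ℕ,
      alpha T = sSup {x : ℕ | x ∉ T ∧ F - x ∉ T ∧ 2 * x ≠ F})
    (seq : ℕ → Set ℕ) (h0 : seq 0 = S)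
    (hrec : ∀ n, (¬Irred (seq n) → seq (n + 1) = seq n ∪ {alpha (seq n)}) ∧
      (Irred (seq n) → seq (n + 1) = seq n)) :
    ∃ k : ℕ, IsNumSgp (seq k) ∧ Irred (seq k) ∧ conc (seq k) = 2 ∧
      frob (seq k) = F := by
  have inv : ∀ n, IsNumSgp (seq n) ∧ frob (seq n) = F ∧ conc (seq n) = 2 := by
    intro n
    induction n with
    | zero => rw [h0]; exact ⟨hS, hFS, hC⟩
    | succ n ih =>
      obtain ⟨hn, hfn, hcn⟩ := ih
      by_cases hi : Irred (seq n)
      · rw [(hrec n).2 hi]; exact ⟨hn, hfn, hcn⟩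
      · have hne : {x : ℕ | x ∉ seq n ∧ F - x ∉ seq n ∧ 2 * x ≠ F}.Nonempty := by
          rw [Set.nonempty_iff_ne_empty]
          intro hempty
          exact hi (irred_of_empty hn hfn hF hempty)
        have hstep := main_step hn hfn hF hcn hne
        rw [(hrec n).1 hi, halpha]
        exact ⟨hstep.2.1, hstep.2.2.1, hstep.2.2.2⟩
  have hex : ∃ k, Irred (seq k) := by
    have key : ∀ n, (∃ k, Irred (seq k)) ∨
        ((seq n)ᶜ : Set ℕ).ncard + n ≤ ((Sᶜ : Set ℕ)).ncard := by
      intro n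
      induction n with
      | zero => right; rw [h0]; omega
      | succ n ih =>
        rcases ih with h | h
        · left; exact h
        · by_cases hi : Irred (seq n)
          · left; exact ⟨n, hi⟩
          · right
            obtain ⟨hn, hfn, hcn⟩ := inv n
            have hne : {x : ℕ | x ∉ seq n ∧ F - x ∉ seq n ∧ 2 * x ≠ F}.Nonempty := by
              rw [Set.nonempty_iff_ne_empty]
              intro hempty
              exact hi (irred_of_empty hn hfn hF hempty)
            have hstep := main_step hn hfn hF hcn hne
            have hcompl : ((seq (n+1))ᶜ : Set ℕ) = (seq n)ᶜ \ {alpha (seq n)} := by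
              rw [(hrec n).1 hi]
              ext x
              simp only [Set.compl_union, Set.mem_inter_iff, Set.mem_diff,
                Set.mem_compl_iff, Set.mem_singleton_iff]
            have hmem : alpha (seq n) ∈ ((seq n)ᶜ : Set ℕ) := by
              rw [halpha]; exact hstep.1
            have hlt : ((seq (n+1))ᶜ : Set ℕ).ncard < ((seq n)ᶜ : Set ℕ).ncard := by
              rw [hcompl]
              exact Set.ncard_diff_singleton_lt_of_mem hmem hn.2.2
            omega
    rcases key (((Sᶜ : Set ℕ)).ncard + 1) with h | h
    · exact h
    · omega
  obtain ⟨k, hk⟩ := hex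
  obtain ⟨hn, hfn, hcn⟩ := inv k
  exact ⟨k, hn, hk, hcn, hfn⟩
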